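/- The square root of the Jensen–Shannon divergence is a metric on the space of Bernoulli distributions: for p, q, r ∈ [0,1], d(p,q) = √JS(Bern(p),Bern(q)) is symmetric, vanishes exactly when p = q, and satisfies the triangle inequality d(p,r) ≤ d(p,q) + d(q,r). -/

import Mathlib

open BigOperators Finset

/-- Discrete Kullback–Leibler divergence with logarithm base 2. -/
noncomputable def klF2 {α : Type*} [Fintype α] (p q : α → ℝ) : ℝ :=
  ∑ a, p a * Real.logb 2 (p a / q a)

/-- Density of the Bernoulli distribution with parameter `p` on `Bool`. -/
def bern (p : ℝ) : Bool → ℝ := fun b => if b then p else 1 - p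

/-- Jensen–Shannon divergence (base-2) between `Bern(p)` and `Bern(q)`. -/
noncomputable def bernJS (p q : ℝ) : ℝ :=
  (1 / 2) * klF2 (bern p) (fun b => (bern p b + bern q b) / 2)
    + (1 / 2) * klF2 (bern q) (fun b => (bern p b + bern q b) / 2)

noncomputable def ell (a b : ℝ) : ℝ :=
  a * Real.log a + b * Real.log b - (a + b) * Real.log ((a + b) / 2)

lemma ell_symm (a b : ℝ) : ell a b = ell b a := by
  simp only [ell]; ring_nf

lemma ell_self (a : ℝ) : ell a a = 0 := by
  simp only [ell]
  rcases eq_or_ne a 0 with h | h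
  · simp [h]
  · rw [show (a + a) / 2 = a by ring]; ring

lemma ell_pos {a b : ℝ} (ha : 0 ≤ a) (hb : 0 ≤ b) (hne : a ≠ b) : 0 < ell a b := by
  have h := Real.strictConvexOn_mul_log.2 (Set.mem_Ici.2 ha) (Set.mem_Ici.2 hb) hne
    (by norm_num : (0:ℝ) < 1/2) (by norm_num : (0:ℝ) < 1/2) (by norm_num)
  simp only [smul_eq_mul] at h
  have : (1/2 : ℝ) * a + 1/2 * b = (a + b) / 2 := by ring
  rw [this] at h
  simp only [ell]
  nlinarith [h]

lemma ell_nonneg {a b : ℝ} (ha : 0 ≤ a) (hb : 0 ≤ b) : 0 ≤ ell a b := by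
  rcases eq_or_ne a b with h | h
  · rw [h, ell_self]
  · exact (ell_pos ha hb h).le

/-- The core scalar inequality. -/
lemma scalar_ineq {x : ℝ} (hx0 : 0 < x) (hx1 : x ≤ 1) :
    x * Real.log x + (2 - x) * Real.log (2 - x) + Real.log x * Real.log (2 - x) ≤ 0 := by
  set g : ℝ → ℝ := fun x => x * Real.log x + (2 - x) * Real.log (2 - x)
    + Real.log x * Real.log (2 - x) with hg
  have key : ∀ y ∈ Set.Ioo (0:ℝ) 1, HasDerivAt g
      (Real.log y - Real.log (2 - y) + Real.log (2 - y) / y - Real.log y / (2 - y)) y := by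
    intro y hy
    have hy0 : y ≠ 0 := ne_of_gt hy.1
    have h2y : (2 : ℝ) - y ≠ 0 := by nlinarith [hy.2]
    have d1 : HasDerivAt (fun x : ℝ => x * Real.log x) (Real.log y + 1) y :=
      Real.hasDerivAt_mul_log hy0
    have dsub : HasDerivAt (fun x : ℝ => 2 - x) (-1) y := by
      simpa using (hasDerivAt_id y).const_sub 2
    have d2 : HasDerivAt (fun x : ℝ => (2 - x) * Real.log (2 - x))
        ((Real.log (2 - y) + 1) * (-1)) y :=
      (Real.hasDerivAt_mul_log h2y).comp y dsub
    have dlog1 : HasDerivAt (fun x : ℝ => Real.log x) (1 / y) y := by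
      simpa using Real.hasDerivAt_log hy0
    have dlog2 : HasDerivAt (fun x : ℝ => Real.log (2 - x)) ((2 - y)⁻¹ * (-1)) y :=
      (Real.hasDerivAt_log h2y).comp y dsub
    have d3 : HasDerivAt (fun x : ℝ => Real.log x * Real.log (2 - x))
        ((1 / y) * Real.log (2 - y) + Real.log y * ((2 - y)⁻¹ * (-1))) y :=
      dlog1.mul dlog2
    have := (d1.add d2).add d3
    refine this.congr_deriv ?_
    field_simp
    ring
  have hmono : MonotoneOn g (Set.Ioc (0:ℝ) 1) := by
    have hconv : Convex ℝ (Set.Ioc (0:ℝ) 1) := convex_Ioc 0 1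
    have hint : interior (Set.Ioc (0:ℝ) 1) = Set.Ioo (0:ℝ) 1 := interior_Ioc
    have hcont : ContinuousOn g (Set.Ioc (0:ℝ) 1) := by
      intro y hy
      have hy0 : y ≠ 0 := ne_of_gt hy.1
      have h2y : (2 : ℝ) - y ≠ 0 := by
        have := hy.2; nlinarith
      have : ContinuousAt g y := by
        have c1 : ContinuousAt (fun x : ℝ => Real.log x) y := Real.continuousAt_log hy0
        have c2 : ContinuousAt (fun x : ℝ => Real.log (2 - x)) y :=
          (Real.continuousAt_log h2y).comp (by fun_prop)
        exact (((continuousAt_id.mul c1).add ((by fun_prop : ContinuousAt (fun x : ℝ => 2 - x) y).mul c2)).add (c1.mul c2))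
      exact this.continuousWithinAt
    refine monotoneOn_of_deriv_nonneg hconv hcont ?_ ?_
    · rw [hint]
      exact fun y hy => ((key y hy).differentiableAt).differentiableWithinAt
    · rw [hint]
      intro y hy
      rw [(key y hy).deriv]
      have hy0 : 0 < y := hy.1
      have hy2 : y < 2 := by linarith [hy.2]
      have hpsi : 0 ≤ y * Real.log y + (2 - y) * Real.log (2 - y) := by
        have := ell_nonneg (le_of_lt hy0) (by linarith : (0:ℝ) ≤ 2 - y)
        simp only [ell] at this
        rw [show (y + (2 - y)) / 2 = 1 by ring, Real.log_one] at this
        linarith [this]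
      have hprod : (0:ℝ) < y * (2 - y) := mul_pos hy0 (by linarith)
      have expand : Real.log y - Real.log (2 - y) + Real.log (2 - y) / y - Real.log y / (2 - y)
          = (1 - y) * (y * Real.log y + (2 - y) * Real.log (2 - y)) / (y * (2 - y)) := by
        have h2y : (2:ℝ) - y ≠ 0 := by linarith
        rw [eq_div_iff (ne_of_gt hprod)]
        field_simp
        ring
      rw [expand]
      exact div_nonneg (mul_nonneg (by linarith [hy.2]) hpsi) hprod.le
  have h1 : g x ≤ g 1 := by
    rcases eq_or_lt_of_le hx1 with h | h
    · rw [h]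
    · exact hmono (Set.mem_Ioc.2 ⟨hx0, hx1⟩) (Set.mem_Ioc.2 ⟨one_pos, le_refl 1⟩) hx1
  have hg1 : g 1 = 0 := by norm_num [hg]
  show g x ≤ 0
  linarith

lemma ell_eq {a b : ℝ} (hab : 0 < a + b) :
    ell a b = a * Real.log a + b * Real.log b - (a + b) * Real.log (a + b)
      + (a + b) * Real.log 2 := by
  rw [ell, Real.log_div (ne_of_gt hab) two_ne_zero]; ring

lemma continuous_ell_right (a : ℝ) : Continuous (fun t => ell a t) := by
  have h : (fun t => ell a t)
      = fun t => a * Real.log a + t * Real.log t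
        - 2 * (((a + t) / 2) * Real.log ((a + t) / 2)) := by
    funext t; rw [ell]; ring
  rw [h]
  have c1 : Continuous fun t : ℝ => t * Real.log t := Real.continuous_mul_log
  have c2 : Continuous fun t : ℝ => ((a + t) / 2) * Real.log ((a + t) / 2) :=
    Real.continuous_mul_log.comp (by fun_prop)
  fun_prop

lemma continuous_ell_left (c : ℝ) : Continuous (fun x => ell x c) := by
  have h : (fun x => ell x c) = fun x => ell c x := funext fun x => ell_symm x c
  rw [h]; exact continuous_ell_right c

lemma hasDerivAt_ell_right {a t : ℝ} (ha : 0 ≤ a) (ht : 0 < t) :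
    HasDerivAt (fun s => ell a s) (Real.log t - Real.log (a + t) + Real.log 2) t := by
  have hat : 0 < a + t := by linarith
  have d1 : HasDerivAt (fun s : ℝ => s * Real.log s) (Real.log t + 1) t :=
    Real.hasDerivAt_mul_log (ne_of_gt ht)
  have dadd : HasDerivAt (fun s : ℝ => a + s) 1 t := (hasDerivAt_id t).const_add a
  have d2 : HasDerivAt (fun s : ℝ => (a + s) * Real.log (a + s))
      ((Real.log (a + t) + 1) * 1) t := (Real.hasDerivAt_mul_log (ne_of_gt hat)).comp t dadd
  have d3 : HasDerivAt (fun s : ℝ => a * Real.log a + s * Real.log s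
      - (a + s) * Real.log (a + s) + (a + s) * Real.log 2)
      (Real.log t + 1 - (Real.log (a + t) + 1) * 1 + 1 * Real.log 2) t :=
    (((d1.const_add (a * Real.log a)).sub d2).add (dadd.mul_const (Real.log 2)))
  have heq : (fun s => ell a s) =ᶠ[nhds t] (fun s : ℝ => a * Real.log a + s * Real.log s
      - (a + s) * Real.log (a + s) + (a + s) * Real.log 2) := by
    filter_upwards [eventually_gt_nhds (show -a < t by linarith)] with s hs
    exact ell_eq (by linarith)
  have := d3.congr_of_eventuallyEq heq
  refine this.congr_deriv ?_; ring

lemma hasDerivAt_ell_left {c x : ℝ} (hc : 0 ≤ c) (hx : 0 < x) :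
    HasDerivAt (fun s => ell s c) (Real.log x - Real.log (c + x) + Real.log 2) x := by
  have h : (fun s => ell s c) = fun s => ell c s := funext fun s => ell_symm s c
  rw [h]; exact hasDerivAt_ell_right hc hx

lemma ell_anti_left {c : ℝ} (hc : 0 < c) : AntitoneOn (fun x => ell x c) (Set.Icc 0 c) := by
  refine antitoneOn_of_deriv_nonpos (convex_Icc 0 c)
    (continuous_ell_left c).continuousOn ?_ ?_
  · rw [interior_Icc]
    exact fun x hx => ((hasDerivAt_ell_left hc.le hx.1).differentiableAt).differentiableWithinAt
  · rw [interior_Icc]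
    intro x hx
    rw [(hasDerivAt_ell_left hc.le hx.1).deriv]
    have h1 : Real.log x + Real.log 2 = Real.log (2 * x) := by
      rw [Real.log_mul two_ne_zero (ne_of_gt hx.1)]; ring
    have h2 : Real.log (2 * x) ≤ Real.log (c + x) :=
      Real.log_le_log (by linarith [hx.1]) (by linarith [hx.2])
    linarith

lemma ell_mono_right {a : ℝ} (ha : 0 ≤ a) : MonotoneOn (fun t => ell a t) (Set.Ici a) := by
  refine monotoneOn_of_deriv_nonneg (convex_Ici a)
    (continuous_ell_right a).continuousOn ?_ ?_
  · rw [interior_Ici]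
    intro t ht
    have ht0 : 0 < t := lt_of_le_of_lt ha ht
    exact ((hasDerivAt_ell_right ha ht0).differentiableAt).differentiableWithinAt
  · rw [interior_Ici]
    intro t ht
    have ht0 : 0 < t := lt_of_le_of_lt ha ht
    rw [(hasDerivAt_ell_right ha ht0).deriv]
    have h1 : Real.log t + Real.log 2 = Real.log (2 * t) := by
      rw [Real.log_mul two_ne_zero (ne_of_gt ht0)]; ring
    have h2 : Real.log (a + t) ≤ Real.log (2 * t) :=
      Real.log_le_log (by linarith) (by linarith [le_of_lt (Set.mem_Ioi.mp ht)])
    linarith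

/-- Scaled form of the scalar inequality, in terms of `ell`. -/
lemma key_ineq {x t : ℝ} (hx : 0 < x) (hxt : x < t) :
    2 * ell x t + (x + t) * (Real.log t - Real.log (x + t) + Real.log 2)
      * (Real.log x - Real.log (x + t) + Real.log 2) ≤ 0 := by
  have hxt0 : 0 < x + t := by linarith
  set X : ℝ := 2 * x / (x + t) with hX
  have hX0 : 0 < X := by positivity
  have hX1 : X ≤ 1 := by
    rw [hX, div_le_one hxt0]; linarith
  have h2X : 2 - X = 2 * t / (x + t) := by
    rw [hX]; field_simp; ring
  have hlogX : Real.log X = Real.log x - Real.log (x + t) + Real.log 2 := by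
    rw [hX, Real.log_div (ne_of_gt (by linarith : (0:ℝ) < 2 * x)) (ne_of_gt hxt0),
      Real.log_mul two_ne_zero (ne_of_gt hx)]; ring
  have hlog2X : Real.log (2 - X) = Real.log t - Real.log (x + t) + Real.log 2 := by
    rw [h2X, Real.log_div (ne_of_gt (by linarith : (0:ℝ) < 2 * t)) (ne_of_gt hxt0),
      Real.log_mul two_ne_zero (ne_of_gt (by linarith : (0:ℝ) < t))]; ring
  have hs := scalar_ineq hX0 hX1
  have hell : ell x t = ((x + t) / 2) * (X * Real.log X + (2 - X) * Real.log (2 - X)) := by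
    rw [ell_eq hxt0, hlogX, hlog2X, hX, h2X]
    field_simp
    ring
  have hmul := mul_le_mul_of_nonneg_left hs (by positivity : (0:ℝ) ≤ (x + t) / 2)
  rw [mul_zero] at hmul
  rw [← hlogX, ← hlog2X]
  nlinarith [hmul, hell]

lemma hasDerivAt_H {x t : ℝ} (ht0 : 0 ≤ t) (hx0 : 0 < x) (hellx : 0 < ell x t)
    (hxt0 : 0 < x + t) :
    HasDerivAt (fun y => (Real.log t - Real.log (y + t) + Real.log 2) / Real.sqrt (ell y t))
      ((-(1 / (x + t)) * Real.sqrt (ell x t)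
        - (Real.log t - Real.log (x + t) + Real.log 2)
          * (1 / (2 * Real.sqrt (ell x t)) * (Real.log x - Real.log (x + t) + Real.log 2)))
        / Real.sqrt (ell x t) ^ 2) x := by
  have dadd : HasDerivAt (fun y : ℝ => y + t) 1 x := (hasDerivAt_id x).add_const t
  have dlog : HasDerivAt (fun y : ℝ => Real.log (y + t)) ((x + t)⁻¹ * 1) x :=
    HasDerivAt.comp x (Real.hasDerivAt_log (ne_of_gt hxt0)) dadd
  have hNd : HasDerivAt (fun y : ℝ => Real.log t - Real.log (y + t) + Real.log 2)
      (-((x + t)⁻¹ * 1)) x := (dlog.const_sub (Real.log t)).add_const (Real.log 2)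
  have hLd : HasDerivAt (fun y => ell y t) (Real.log x - Real.log (x + t) + Real.log 2) x := by
    have := hasDerivAt_ell_left ht0 hx0
    rwa [add_comm t x] at this
  have hDd : HasDerivAt (fun y => Real.sqrt (ell y t))
      (1 / (2 * Real.sqrt (ell x t)) * (Real.log x - Real.log (x + t) + Real.log 2)) x :=
    (Real.hasDerivAt_sqrt (ne_of_gt hellx)).comp x hLd
  have := hNd.div hDd (ne_of_gt (Real.sqrt_pos.2 hellx))
  refine this.congr_deriv ?_
  ring

/-- Key comparison: the ratio `log(2t/(x+t)) / √(ell x t)` is monotone in `x` on `[0, t)`. -/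
lemma key_comparison {a b t : ℝ} (ha : 0 ≤ a) (hab : a ≤ b) (hbt : b < t) :
    (Real.log t - Real.log (a + t) + Real.log 2) / Real.sqrt (ell a t)
      ≤ (Real.log t - Real.log (b + t) + Real.log 2) / Real.sqrt (ell b t) := by
  rcases eq_or_lt_of_le hab with rfl | hab
  · exact le_refl _
  have hb0 : 0 < b := lt_of_le_of_lt ha hab
  have ht0 : 0 < t := lt_trans hb0 hbt
  set H : ℝ → ℝ := fun x => (Real.log t - Real.log (x + t) + Real.log 2) / Real.sqrt (ell x t)
    with hH
  have hellpos : ∀ x ∈ Set.Icc a b, 0 < ell x t := by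
    intro x hx
    exact ell_pos (ha.trans hx.1) ht0.le (ne_of_lt (lt_of_le_of_lt hx.2 hbt))
  have hmono : MonotoneOn H (Set.Icc a b) := by
    refine monotoneOn_of_deriv_nonneg (convex_Icc a b) ?_ ?_ ?_
    · -- continuity
      intro x hx
      have hxt0 : (0:ℝ) < x + t := by linarith [ha.trans hx.1]
      have hs0 : Real.sqrt (ell x t) ≠ 0 := ne_of_gt (Real.sqrt_pos.2 (hellpos x hx))
      have cnum : ContinuousAt (fun x : ℝ => Real.log t - Real.log (x + t) + Real.log 2) x := by
        have hinner : ContinuousAt (fun y : ℝ => y + t) x := continuousAt_id.add continuousAt_const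
        have : ContinuousAt (fun x : ℝ => Real.log (x + t)) x :=
          hinner.log (ne_of_gt hxt0)
        exact (continuousAt_const.sub this).add continuousAt_const
      have cden : ContinuousAt (fun x : ℝ => Real.sqrt (ell x t)) x :=
        Real.continuous_sqrt.continuousAt.comp (continuous_ell_left t).continuousAt
      exact ((cnum.div cden hs0)).continuousWithinAt
    · rw [interior_Icc]
      intro x hx
      have hx0 : 0 < x := lt_of_le_of_lt ha hx.1
      have hxmem : x ∈ Set.Icc a b := ⟨hx.1.le, hx.2.le⟩
      have hellx : 0 < ell x t := hellpos x hxmem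
      exact ((hasDerivAt_H ht0.le hx0 hellx (by linarith)).differentiableAt).differentiableWithinAt
    · rw [interior_Icc]
      intro x hx
      have hx0 : 0 < x := lt_of_le_of_lt ha hx.1
      have hxt : x < t := lt_trans hx.2 hbt
      have hxmem : x ∈ Set.Icc a b := ⟨hx.1.le, hx.2.le⟩
      have hellx : 0 < ell x t := hellpos x hxmem
      rw [(hasDerivAt_H ht0.le hx0 hellx (by linarith [hx.1])).deriv]
      have hxt0 : (0:ℝ) < x + t := by linarith
      have hs : Real.sqrt (ell x t) ^ 2 = ell x t := Real.sq_sqrt hellx.le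
      have hspos : 0 < Real.sqrt (ell x t) := Real.sqrt_pos.2 hellx
      set s := Real.sqrt (ell x t)
      set N := Real.log t - Real.log (x + t) + Real.log 2 with hN
      set L := Real.log x - Real.log (x + t) + Real.log 2 with hL
      have key := key_ineq hx0 hxt
      rw [← hN, ← hL] at key
      apply div_nonneg _ (sq_nonneg s)
      have hnum : -(1 / (x + t)) * s - N * (1 / (2 * s) * L)
          = (-(2 * ell x t + (x + t) * N * L)) / (2 * s * (x + t)) := by
        rw [eq_div_iff (ne_of_gt (by positivity : (0:ℝ) < 2 * s * (x + t)))]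
        field_simp
        linear_combination (-2) * hs
      rw [hnum]
      exact div_nonneg (by linarith) (by positivity)
  have hHab := hmono (Set.left_mem_Icc.2 hab.le) (Set.right_mem_Icc.2 hab.le) hab.le
  exact hHab

/-- Middle case of the per-letter triangle inequality. -/
lemma tri_ell_mid {a b c : ℝ} (ha : 0 ≤ a) (hab : a < b) (hbc : b < c) :
    Real.sqrt (ell a c) ≤ Real.sqrt (ell a b) + Real.sqrt (ell b c) := by
  have hb0 : 0 < b := lt_of_le_of_lt ha hab
  set F : ℝ → ℝ := fun t => Real.sqrt (ell b t) - Real.sqrt (ell a t) with hF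
  have hmono : MonotoneOn F (Set.Icc b c) := by
    refine monotoneOn_of_deriv_nonneg (convex_Icc b c) ?_ ?_ ?_
    · exact ((Real.continuous_sqrt.comp (continuous_ell_right b)).sub
        (Real.continuous_sqrt.comp (continuous_ell_right a))).continuousOn
    · rw [interior_Icc]
      intro t ht
      have htb : b < t := ht.1
      have ht0 : 0 < t := lt_trans hb0 htb
      have hellb : 0 < ell b t := ell_pos hb0.le ht0.le (ne_of_lt htb)
      have hella : 0 < ell a t := ell_pos ha ht0.le (ne_of_lt (lt_trans hab htb))
      have d1 : HasDerivAt (fun s => Real.sqrt (ell b s))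
          (1 / (2 * Real.sqrt (ell b t)) * (Real.log t - Real.log (b + t) + Real.log 2)) t :=
        (Real.hasDerivAt_sqrt (ne_of_gt hellb)).comp t (hasDerivAt_ell_right hb0.le ht0)
      have d2 : HasDerivAt (fun s => Real.sqrt (ell a s))
          (1 / (2 * Real.sqrt (ell a t)) * (Real.log t - Real.log (a + t) + Real.log 2)) t :=
        (Real.hasDerivAt_sqrt (ne_of_gt hella)).comp t (hasDerivAt_ell_right ha ht0)
      exact ((d1.sub d2).differentiableAt).differentiableWithinAt
    · rw [interior_Icc]
      intro t ht
      have htb : b < t := ht.1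
      have ht0 : 0 < t := lt_trans hb0 htb
      have hellb : 0 < ell b t := ell_pos hb0.le ht0.le (ne_of_lt htb)
      have hella : 0 < ell a t := ell_pos ha ht0.le (ne_of_lt (lt_trans hab htb))
      have d1 : HasDerivAt (fun s => Real.sqrt (ell b s))
          (1 / (2 * Real.sqrt (ell b t)) * (Real.log t - Real.log (b + t) + Real.log 2)) t :=
        (Real.hasDerivAt_sqrt (ne_of_gt hellb)).comp t (hasDerivAt_ell_right hb0.le ht0)
      have d2 : HasDerivAt (fun s => Real.sqrt (ell a s))
          (1 / (2 * Real.sqrt (ell a t)) * (Real.log t - Real.log (a + t) + Real.log 2)) t :=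
        (Real.hasDerivAt_sqrt (ne_of_gt hella)).comp t (hasDerivAt_ell_right ha ht0)
      rw [show deriv F t = _ from (d1.sub d2).deriv]
      have hcmp := key_comparison ha hab.le htb
      have hsb : 0 < Real.sqrt (ell b t) := Real.sqrt_pos.2 hellb
      have hsa : 0 < Real.sqrt (ell a t) := Real.sqrt_pos.2 hella
      have e1 : 1 / (2 * Real.sqrt (ell b t)) * (Real.log t - Real.log (b + t) + Real.log 2)
          = ((Real.log t - Real.log (b + t) + Real.log 2) / Real.sqrt (ell b t)) / 2 := by
        field_simp
      have e2 : 1 / (2 * Real.sqrt (ell a t)) * (Real.log t - Real.log (a + t) + Real.log 2)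
          = ((Real.log t - Real.log (a + t) + Real.log 2) / Real.sqrt (ell a t)) / 2 := by
        field_simp
      rw [e1, e2]
      linarith
  have h1 := hmono (Set.left_mem_Icc.2 (le_of_lt hbc)) (Set.right_mem_Icc.2 (le_of_lt hbc))
    (le_of_lt hbc)
  have h2 : F b = -Real.sqrt (ell a b) := by
    simp [hF, ell_self]
  rw [h2] at h1
  have := Real.sqrt_nonneg (ell a b)
  simp only [hF] at h1
  linarith

/-- Per-letter triangle inequality for `√ell` (core case `a ≤ c`). -/
lemma tri_ell_aux {a b c : ℝ} (ha : 0 ≤ a) (hb : 0 ≤ b) (hc : 0 ≤ c) (hac : a ≤ c) :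
    Real.sqrt (ell a c) ≤ Real.sqrt (ell a b) + Real.sqrt (ell b c) := by
  rcases eq_or_lt_of_le hac with rfl | hac
  · rw [ell_self]
    simp [Real.sqrt_nonneg]
    positivity
  rcases le_or_gt b a with hba | hab
  · -- b ≤ a < c : ell a c ≤ ell b c
    have h := ell_anti_left (lt_of_le_of_lt ha hac)
      (Set.mem_Icc.2 ⟨hb, hba.trans hac.le⟩) (Set.mem_Icc.2 ⟨ha, hac.le⟩) hba
    have := Real.sqrt_le_sqrt h
    have h0 := Real.sqrt_nonneg (ell a b)
    linarith
  rcases le_or_gt c b with hcb | hbc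
  · -- a < c ≤ b : ell a c ≤ ell a b
    have h := ell_mono_right ha (Set.mem_Ici.2 hac.le)
      (Set.mem_Ici.2 (hac.le.trans hcb)) hcb
    have := Real.sqrt_le_sqrt h
    have h0 := Real.sqrt_nonneg (ell b c)
    linarith
  · exact tri_ell_mid ha hab hbc

/-- Per-letter triangle inequality for `√ell`. -/
lemma tri_ell {a b c : ℝ} (ha : 0 ≤ a) (hb : 0 ≤ b) (hc : 0 ≤ c) :
    Real.sqrt (ell a c) ≤ Real.sqrt (ell a b) + Real.sqrt (ell b c) := by
  rcases le_total a c with hac | hca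
  · exact tri_ell_aux ha hb hc hac
  · have := tri_ell_aux hc hb ha hca
    rw [ell_symm c b, ell_symm b a, ell_symm c a] at this
    linarith

lemma half_letter {u v : ℝ} (hu : 0 ≤ u) (hv : 0 ≤ v) :
    u * Real.logb 2 (u / ((u + v) / 2)) + v * Real.logb 2 (v / ((u + v) / 2))
      = ell u v / Real.log 2 := by
  rcases eq_or_lt_of_le (add_nonneg hu hv) with h0 | h0
  · have hu0 : u = 0 := by linarith
    have hv0 : v = 0 := by linarith
    simp [hu0, hv0, ell]
  have hm : (0:ℝ) < (u + v) / 2 := by linarith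
  have hterm : ∀ w : ℝ, 0 ≤ w →
      w * Real.log (w / ((u + v) / 2)) = w * Real.log w - w * Real.log ((u + v) / 2) := by
    intro w hw
    rcases eq_or_lt_of_le hw with rfl | hw
    · simp
    · rw [Real.log_div (ne_of_gt hw) (ne_of_gt hm)]; ring
  simp only [Real.logb]
  have hre : u * (Real.log (u / ((u + v) / 2)) / Real.log 2)
      + v * (Real.log (v / ((u + v) / 2)) / Real.log 2)
      = (u * Real.log (u / ((u + v) / 2)) + v * Real.log (v / ((u + v) / 2))) / Real.log 2 := by
    ring
  rw [hre, hterm u hu, hterm v hv, ell]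
  ring

lemma bernJS_eq {p q : ℝ} (hp : p ∈ Set.Icc (0:ℝ) 1) (hq : q ∈ Set.Icc (0:ℝ) 1) :
    bernJS p q = (ell p q + ell (1 - p) (1 - q)) / (2 * Real.log 2) := by
  have hlog2 : (0:ℝ) < Real.log 2 := Real.log_pos one_lt_two
  have h1 := half_letter hp.1 hq.1
  have h2 := half_letter (by linarith [hp.2] : (0:ℝ) ≤ 1 - p) (by linarith [hq.2] : (0:ℝ) ≤ 1 - q)
  have rhs_eq : (ell p q + ell (1 - p) (1 - q)) / (2 * Real.log 2)
      = (1/2) * (ell p q / Real.log 2) + (1/2) * (ell (1 - p) (1 - q) / Real.log 2) := by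
    field_simp
  simp only [bernJS, klF2, bern, Fintype.sum_bool, Bool.false_eq_true, if_true, if_false]
  rw [rhs_eq]
  linarith [h1, h2]

lemma mink {u v w x : ℝ} (hu : 0 ≤ u) (hv : 0 ≤ v) (hw : 0 ≤ w) (hx : 0 ≤ x) :
    Real.sqrt ((u + v)^2 + (w + x)^2)
      ≤ Real.sqrt (u^2 + w^2) + Real.sqrt (v^2 + x^2) := by
  set A := Real.sqrt (u^2 + w^2) with hA
  set B := Real.sqrt (v^2 + x^2) with hB
  have hA0 : 0 ≤ A := Real.sqrt_nonneg _
  have hB0 : 0 ≤ B := Real.sqrt_nonneg _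
  have hA2 : A^2 = u^2 + w^2 := Real.sq_sqrt (by positivity)
  have hB2 : B^2 = v^2 + x^2 := Real.sq_sqrt (by positivity)
  have key : (u + v)^2 + (w + x)^2 ≤ (A + B)^2 := by
    nlinarith [sq_nonneg (u*x - w*v), mul_nonneg hA0 hB0, mul_nonneg hu hv, mul_nonneg hw hx,
      sq_nonneg (A*B - u*v - w*x)]
  calc Real.sqrt ((u + v)^2 + (w + x)^2) ≤ Real.sqrt ((A + B)^2) := Real.sqrt_le_sqrt key
    _ = A + B := Real.sqrt_sq (by linarith)

/-- The Jensen–Shannon distance `√JS(Bern(p), Bern(q))` is a metric on Bernoulli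
distributions: it is symmetric, vanishes exactly when `p = q`, and satisfies the
triangle inequality. -/
theorem bernJS_sqrt_metric (p q r : ℝ)
    (hp : p ∈ Set.Icc (0 : ℝ) 1) (hq : q ∈ Set.Icc (0 : ℝ) 1)
    (hr : r ∈ Set.Icc (0 : ℝ) 1) :
    Real.sqrt (bernJS p q) = Real.sqrt (bernJS q p) ∧
    (Real.sqrt (bernJS p q) = 0 ↔ p = q) ∧
    Real.sqrt (bernJS p r) ≤ Real.sqrt (bernJS p q) + Real.sqrt (bernJS q r) := by
  have hlog2 : (0:ℝ) < Real.log 2 := Real.log_pos one_lt_two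
  have hc : (0:ℝ) < 2 * Real.log 2 := by linarith
  have hp' : (0:ℝ) ≤ 1 - p := by linarith [hp.2]
  have hq' : (0:ℝ) ≤ 1 - q := by linarith [hq.2]
  have hr' : (0:ℝ) ≤ 1 - r := by linarith [hr.2]
  refine ⟨?_, ?_, ?_⟩
  · rw [bernJS_eq hp hq, bernJS_eq hq hp, ell_symm q p, ell_symm (1 - q) (1 - p)]
  · rw [bernJS_eq hp hq]
    constructor
    · intro h
      by_contra hne
      have h1 : 0 < ell p q := ell_pos hp.1 hq.1 hne
      have h2 : 0 ≤ ell (1 - p) (1 - q) := ell_nonneg hp' hq'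
      have hpos : 0 < (ell p q + ell (1 - p) (1 - q)) / (2 * Real.log 2) := by positivity
      rw [Real.sqrt_eq_zero hpos.le] at h
      linarith
    · rintro rfl
      simp [ell_self]
  · rw [bernJS_eq hp hr, bernJS_eq hp hq, bernJS_eq hq hr]
    have t1 : Real.sqrt (ell p r) ≤ Real.sqrt (ell p q) + Real.sqrt (ell q r) :=
      tri_ell hp.1 hq.1 hr.1
    have t2 : Real.sqrt (ell (1 - p) (1 - r))
        ≤ Real.sqrt (ell (1 - p) (1 - q)) + Real.sqrt (ell (1 - q) (1 - r)) :=
      tri_ell hp' hq' hr'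
    have nn1 : (0:ℝ) ≤ ell p r + ell (1 - p) (1 - r) :=
      add_nonneg (ell_nonneg hp.1 hr.1) (ell_nonneg hp' hr')
    have nn2 : (0:ℝ) ≤ ell p q + ell (1 - p) (1 - q) :=
      add_nonneg (ell_nonneg hp.1 hq.1) (ell_nonneg hp' hq')
    have nn3 : (0:ℝ) ≤ ell q r + ell (1 - q) (1 - r) :=
      add_nonneg (ell_nonneg hq.1 hr.1) (ell_nonneg hq' hr')
    have key : Real.sqrt (ell p r + ell (1 - p) (1 - r))
        ≤ Real.sqrt (ell p q + ell (1 - p) (1 - q))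
          + Real.sqrt (ell q r + ell (1 - q) (1 - r)) := by
      calc Real.sqrt (ell p r + ell (1 - p) (1 - r))
          ≤ Real.sqrt ((Real.sqrt (ell p q) + Real.sqrt (ell q r))^2
            + (Real.sqrt (ell (1 - p) (1 - q)) + Real.sqrt (ell (1 - q) (1 - r)))^2) := by
            apply Real.sqrt_le_sqrt
            have b1 : ell p r ≤ (Real.sqrt (ell p q) + Real.sqrt (ell q r))^2 := by
              rw [← Real.sq_sqrt (ell_nonneg hp.1 hr.1)]
              exact pow_le_pow_left₀ (Real.sqrt_nonneg _) t1 2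
            have b2 : ell (1 - p) (1 - r) ≤ (Real.sqrt (ell (1 - p) (1 - q))
                + Real.sqrt (ell (1 - q) (1 - r)))^2 := by
              rw [← Real.sq_sqrt (ell_nonneg hp' hr')]
              exact pow_le_pow_left₀ (Real.sqrt_nonneg _) t2 2
            linarith
        _ ≤ Real.sqrt ((Real.sqrt (ell p q))^2 + (Real.sqrt (ell (1 - p) (1 - q)))^2)
            + Real.sqrt ((Real.sqrt (ell q r))^2 + (Real.sqrt (ell (1 - q) (1 - r)))^2) :=
            mink (Real.sqrt_nonneg _) (Real.sqrt_nonneg _) (Real.sqrt_nonneg _)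
              (Real.sqrt_nonneg _)
        _ = Real.sqrt (ell p q + ell (1 - p) (1 - q))
            + Real.sqrt (ell q r + ell (1 - q) (1 - r)) := by
            rw [Real.sq_sqrt (ell_nonneg hp.1 hq.1), Real.sq_sqrt (ell_nonneg hp' hq'),
              Real.sq_sqrt (ell_nonneg hq.1 hr.1), Real.sq_sqrt (ell_nonneg hq' hr')]
    rw [Real.sqrt_div nn1, Real.sqrt_div nn2, Real.sqrt_div nn3, ← add_div]
    exact (div_le_div_iff_of_pos_right (Real.sqrt_pos.2 hc)).2 key
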